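/- There exists a nonzero vector (L_0, L_1, …, L_n) ∈ ℂ^{n+1} such that the formal power series L_0 v_0 + L_1 v_1 + ⋯ + L_n v_n ∈ ℂ[[z]] has order at least (n−1)k. Since (n−1)k > n for k ≥ 2 and n ≥ 3, the hyperplane {L_0 x_0 + ⋯ + L_n x_n = 0} has order of contact greater than n with the curve at p; that is, every fixed point of the generalized Fermat group is a hyperosculating point of the standard embedding of the generalized Fermat curve. -/

import Mathlib

/-- The generalized binomial coefficient `C(x, i) = (∏_{m=0}^{i-1} (x - m)) / i!`. -/
noncomputable def genBinom (x : ℂ) (i : ℕ) : ℂ :=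
  (∏ m ∈ Finset.range i, (x - (m : ℂ))) / (Nat.factorial i : ℂ)

/-- there is a nonzero linear form `L` such that the power series
`L₀ v₀ + ⋯ + Lₙ vₙ` has order at least `(n-1)k`; i.e. every fixed point of the
generalized Fermat group is a hyperosculating point of the standard embedding of the
generalized Fermat curve. -/
theorem stmt_2 (k n : ℕ) (hk : 2 ≤ k) (hn : 3 ≤ n)
    (lam : ℕ → ℂ) (hlam0 : lam 0 = 1)
    (hlam_ne0 : ∀ i, 1 ≤ i → i ≤ n - 2 → lam i ≠ 0)
    (hlam_ne1 : ∀ i, 1 ≤ i → i ≤ n - 2 → lam i ≠ 1)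
    (hlam_inj : ∀ i j, i ≤ n - 2 → j ≤ n - 2 → lam i = lam j → i = j)
    (ρ : ℕ → ℂ) (hρ : ∀ j, 1 ≤ j → j ≤ n - 1 → ρ j ^ k = - lam (j - 1))
    (c : ℕ → ℕ → ℂ)
    (hc : ∀ i j, c i j = ρ j * (lam (j - 1))⁻¹ ^ i * genBinom ((k : ℂ))⁻¹ i)
    (v : ℕ → PowerSeries ℂ)
    (hv0 : v 0 = 1) (hv1 : v 1 = PowerSeries.X)
    (hv : ∀ j, 1 ≤ j → j ≤ n - 1 → ∀ m,
      PowerSeries.coeff m (v (j + 1)) = if k ∣ m then c (m / k) j else 0) :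
    ∃ L : Fin (n + 1) → ℂ, L ≠ 0 ∧
      (((n - 1) * k : ℕ) : ℕ∞) ≤ (∑ j : Fin (n + 1), L j • v (j : ℕ)).order := by
  -- positions where a coefficient constraint is imposed
  set f : Fin n → ℕ := fun t => if t.val = 0 then 1 else (t.val - 1) * k with hf
  -- the linear map sending L to the constrained coefficients
  let φ : (Fin (n + 1) → ℂ) →ₗ[ℂ] (Fin n → ℂ) :=
    { toFun := fun L t => ∑ j : Fin (n + 1), L j * PowerSeries.coeff (f t) (v j)
      map_add' := by
        intro x y; funext t
        simp [add_mul, Finset.sum_add_distrib]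
      map_smul' := by
        intro a x; funext t
        simp [Finset.mul_sum, mul_assoc] }
  obtain ⟨L, hL0, hLker⟩ : ∃ L, L ≠ 0 ∧ φ L = 0 := by
    by_contra h
    push_neg at h
    have hinj : Function.Injective φ := by
      rw [← LinearMap.ker_eq_bot, LinearMap.ker_eq_bot']
      intro L hL
      by_contra hne
      exact (h L hne) hL
    have hle := LinearMap.finrank_le_finrank_of_injective hinj
    rw [Module.finrank_fin_fun, Module.finrank_fin_fun] at hle
    omega
  refine ⟨L, hL0, ?_⟩
  refine PowerSeries.le_order _ _ ?_
  intro m hm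
  have hm' : m < (n - 1) * k := by exact_mod_cast hm
  have hφt : ∀ t : Fin n, ∑ j : Fin (n + 1), L j * PowerSeries.coeff (f t) (v j) = 0 := by
    intro t
    exact congrFun hLker t
  have hcoeff : PowerSeries.coeff m (∑ j : Fin (n + 1), L j • v (j : ℕ)) =
      ∑ j : Fin (n + 1), L j * PowerSeries.coeff m (v (j : ℕ)) := by
    rw [map_sum]
    simp [PowerSeries.coeff_smul, smul_eq_mul]
  rw [hcoeff]
  by_cases h0 : m = 0
  · have h1 : (1 : ℕ) < n := by omega
    have := hφt ⟨1, h1⟩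
    simpa [hf, h0] using this
  by_cases h1 : m = 1
  · have h0n : (0 : ℕ) < n := by omega
    have := hφt ⟨0, h0n⟩
    simpa [hf, h1] using this
  by_cases hdvd : k ∣ m
  · obtain ⟨i, rfl⟩ := hdvd
    have hi1 : 1 ≤ i := by
      rcases Nat.eq_zero_or_pos i with h | h
      · exact absurd (by simp [h]) h0
      · exact h
    have hi2 : i ≤ n - 2 := by
      by_contra hgt
      push_neg at hgt
      have : (n - 1) * k ≤ k * i := by
        have : n - 1 ≤ i := by omega
        calc (n - 1) * k ≤ i * k := Nat.mul_le_mul_right k this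
          _ = k * i := Nat.mul_comm i k
      omega
    have ht : i + 1 < n := by omega
    have := hφt ⟨i + 1, ht⟩
    have hfv : f ⟨i + 1, ht⟩ = k * i := by simp [hf, Nat.mul_comm]
    rw [hfv] at this
    exact this
  · -- all coefficients vanish individually
    refine Finset.sum_eq_zero ?_
    intro j _
    rcases j with ⟨jv, hj⟩
    match jv, hj with
    | 0, _ => simp [hv0, PowerSeries.coeff_one, h0]
    | 1, _ => simp [hv1, PowerSeries.coeff_X, h1]
    | (j' + 2), hj =>
      have h1j : 1 ≤ j' + 1 := by omega
      have h2j : j' + 1 ≤ n - 1 := by omega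
      have := hv (j' + 1) h1j h2j m
      have h2 : PowerSeries.coeff m (v (j' + 2)) = 0 := by
        rw [show j' + 2 = j' + 1 + 1 by omega, this, if_neg hdvd]
      simp only [Fin.val_mk]
      rw [h2, mul_zero]
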